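/- arXiv:1811.11305 — 2 statements merged into one kernel-verified Lean document; each statement's English description precedes it below -/
import Mathlib

section
/- Let a and b be nonzero integers, n a positive integer such that aj + b ≠ 0 for every integer j with 1 ≤ j ≤ n, and k a positive integer. Then ∑_{j=1}^{n} 1/(aj+b)^{2k} = -1/(2b^{2k}) + 1/(2(an+b)^{2k}) - ((-1)^{k}(2π)^{2k}/2) ∫_{0}^{1} [ ∑_{j=0}^{k} B_{2j}(2-2^{2j})(1-u)^{2k-2j}/((2j)!(2k-2j)!) ]·( sin(2π(an+b)u) - sin(2πbu) )·cot(πau) du. -/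
open Real

open PowerSeries Finset

lemma S1_even (m : ℕ) (hm : Odd m) :
    ∑ j ∈ Finset.range (m+1), (m.choose j : ℚ) * 2^j * bernoulli j = 0 := by
  set B : ℚ⟦X⟧ := bernoulliPowerSeries ℚ with hB
  set E : ℚ⟦X⟧ := PowerSeries.exp ℚ with hE
  set G : ℚ⟦X⟧ := rescale 2 B * E with hG
  have h1 : rescale (2:ℚ) B * (E^2 - 1) = PowerSeries.C (2:ℚ) * X := by
    have h := congrArg (rescale (2:ℚ)) (bernoulliPowerSeries_mul_exp_sub_one ℚ)
    rw [map_mul, map_sub, map_one, rescale_X] at h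
    have hre : rescale (2:ℚ) (PowerSeries.exp ℚ) = (PowerSeries.exp ℚ)^2 := by
      rw [exp_pow_eq_rescale_exp]; norm_num
    rw [hre] at h
    exact h
  have hEE : E * evalNegHom E = 1 := PowerSeries.exp_mul_exp_neg_eq_one (A := ℚ)
  have h2 : G * (E - evalNegHom E) = PowerSeries.C (2:ℚ) * X := by
    have e : G * (E - evalNegHom E) = rescale 2 B * (E^2 - E * evalNegHom E) := by
      rw [hG]; ring
    rw [e, hEE, h1]
  have hne : evalNegHom (evalNegHom E) = E := by
    show rescale (-1:ℚ) (rescale (-1:ℚ) E) = E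
    rw [rescale_rescale]; norm_num [rescale_one]
  have h3 : evalNegHom G * (E - evalNegHom E) = PowerSeries.C (2:ℚ) * X := by
    have h := congrArg (evalNegHom (A := ℚ)) h2
    have hC : evalNegHom (PowerSeries.C (2:ℚ)) = PowerSeries.C (2:ℚ) := by
      show rescale (-1:ℚ) (PowerSeries.C (2:ℚ)) = _
      ext n
      rw [PowerSeries.coeff_rescale, PowerSeries.coeff_C]
      split_ifs with hn
      · subst hn; norm_num
      · ring
    rw [map_mul evalNegHom G (E - evalNegHom E), map_sub, hne,
      map_mul evalNegHom (PowerSeries.C (2:ℚ)) X, evalNegHom_X, hC] at h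
    have e : evalNegHom G * (E - evalNegHom E)
        = -(evalNegHom G * (evalNegHom E - E)) := by ring
    rw [e, h, mul_neg, neg_neg]
  have hdiff : E - evalNegHom E ≠ 0 := by
    intro h0
    have := congrArg (PowerSeries.coeff (R := ℚ) 1) h0
    rw [map_sub] at this
    have c1 : PowerSeries.coeff (R := ℚ) 1 E = 1 := by
      rw [hE, PowerSeries.coeff_exp]; norm_num
    have c2 : PowerSeries.coeff (R := ℚ) 1 (evalNegHom E) = -1 := by
      show PowerSeries.coeff (R := ℚ) 1 (rescale (-1:ℚ) E) = -1
      rw [PowerSeries.coeff_rescale, hE, PowerSeries.coeff_exp]; norm_num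
    rw [c1, c2, map_zero] at this
    norm_num at this
  have hGeq : G = evalNegHom G := by
    have : (G - evalNegHom G) * (E - evalNegHom E) = 0 := by
      rw [sub_mul, h2, h3, sub_self]
    rcases mul_eq_zero.mp this with h | h
    · exact sub_eq_zero.mp h
    · exact absurd h hdiff
  have hcoeff : PowerSeries.coeff (R := ℚ) m G = 0 := by
    have h := congrArg (PowerSeries.coeff (R := ℚ) m) hGeq
    have : PowerSeries.coeff (R := ℚ) m (evalNegHom G) = (-1)^m * PowerSeries.coeff (R := ℚ) m G := by
      show PowerSeries.coeff (R := ℚ) m (rescale (-1:ℚ) G) = _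
      rw [PowerSeries.coeff_rescale]
    rw [this, hm.neg_one_pow] at h
    linarith
  have hexp : PowerSeries.coeff (R := ℚ) m G
      = ∑ j ∈ Finset.range (m+1), (2^j * bernoulli j / j.factorial) * (1 / (m - j).factorial) := by
    rw [hG, PowerSeries.coeff_mul, Finset.Nat.sum_antidiagonal_eq_sum_range_succ_mk]
    refine Finset.sum_congr rfl fun j hj => ?_
    rw [PowerSeries.coeff_rescale, hB, hE, PowerSeries.coeff_exp, bernoulliPowerSeries]
    simp [PowerSeries.coeff_mk, mul_div_assoc]
  rw [hexp] at hcoeff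
  have key := congrArg (fun x => (m.factorial : ℚ) * x) hcoeff
  simp only [Finset.mul_sum, mul_zero] at key
  rw [← key]
  refine Finset.sum_congr rfl fun j hj => ?_
  rw [Finset.mem_range] at hj
  have hjm : j ≤ m := Nat.lt_succ_iff.mp hj
  have hch : (m.choose j : ℚ) = m.factorial / (j.factorial * (m - j).factorial) := by
    rw [Nat.choose_eq_factorial_div_factorial hjm]
    rw [Nat.cast_div (Nat.factorial_mul_factorial_dvd_factorial hjm)]
    · push_cast; ring
    · positivity
  rw [hch]
  have h1 : (j.factorial : ℚ) ≠ 0 := by positivity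
  have h2 : ((m - j).factorial : ℚ) ≠ 0 := by positivity
  field_simp

lemma bernoulli_odd_zero {n : ℕ} (h : Odd n) (h1 : 1 < n) : bernoulli n = 0 := by
  rw [bernoulli_eq_bernoulli'_of_ne_one (by omega)]
  exact bernoulli'_eq_zero_of_odd h h1

lemma sum_range_double {M : Type*} [AddCommMonoid M] (f : ℕ → M) (k : ℕ) :
    ∑ i ∈ Finset.range (2 * k), f i
      = ∑ j ∈ Finset.range k, f (2 * j) + ∑ j ∈ Finset.range k, f (2 * j + 1) := by
  induction k with
  | zero => simp
  | succ k ih =>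
      rw [show 2*(k+1) = 2*k+1+1 by ring, Finset.sum_range_succ, Finset.sum_range_succ,
        Finset.sum_range_succ (fun j => f (2*j)) k, Finset.sum_range_succ (fun j => f (2*j+1)) k,
        ih]
      abel

lemma lemB (k : ℕ) (hk : 0 < k) :
    ∑ j ∈ Finset.range k,
      ((2*k-1).choose (2*j) : ℚ) * (2 - 2^(2*j)) * bernoulli (2*j)
      = if k = 1 then 1 else 0 := by
  have hsplit := sum_range_double
    (fun i => ((2*k-1).choose i : ℚ) * (2 - 2^i) * bernoulli i) k
  have hodd : ∑ j ∈ Finset.range k,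
      ((2*k-1).choose (2*j+1) : ℚ) * (2 - 2^(2*j+1)) * bernoulli (2*j+1) = 0 := by
    refine Finset.sum_eq_zero fun j _ => ?_
    rcases Nat.eq_zero_or_pos j with rfl | hj
    · norm_num
    · rw [bernoulli_odd_zero ⟨j, by ring⟩ (by omega)]; ring
  have heven : ∑ j ∈ Finset.range k,
      ((2*k-1).choose (2*j) : ℚ) * (2 - 2^(2*j)) * bernoulli (2*j)
      = ∑ i ∈ Finset.range (2*k), ((2*k-1).choose i : ℚ) * (2 - 2^i) * bernoulli i := by
    rw [hsplit, hodd, add_zero]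
  rw [heven]
  have hdistrib : ∑ i ∈ Finset.range (2*k), ((2*k-1).choose i : ℚ) * (2 - 2^i) * bernoulli i
      = 2 * (∑ i ∈ Finset.range (2*k), ((2*k-1).choose i : ℚ) * bernoulli i)
        - ∑ i ∈ Finset.range (2*k), ((2*k-1).choose i : ℚ) * 2^i * bernoulli i := by
    rw [Finset.mul_sum, ← Finset.sum_sub_distrib]
    exact Finset.sum_congr rfl fun i _ => by ring
  have hS := S1_even (2*k-1) ⟨k-1, by omega⟩
  rw [show 2*k-1+1 = 2*k by omega] at hS
  rw [hdistrib, hS, sub_zero]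
  have hW : ∑ i ∈ Finset.range (2*k), ((2*k-1).choose i : ℚ) * bernoulli i
      = (if 2*k-1 = 1 then 1 else 0) + bernoulli (2*k-1) := by
    have h2k : 2*k = (2*k-1) + 1 := by omega
    rw [h2k, Finset.sum_range_succ]
    simp only [Nat.add_sub_cancel]
    rw [sum_bernoulli, Nat.choose_self]
    push_cast; ring
  rw [hW]
  rcases eq_or_lt_of_le (Nat.one_le_iff_ne_zero.mpr (Nat.pos_iff_ne_zero.mp hk)) with h1 | h1
  · rw [← h1]; norm_num [bernoulli_one]
  · have : 2*k-1 ≠ 1 := by omega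
    rw [if_neg this, if_neg (by omega : k ≠ 1),
      bernoulli_odd_zero ⟨k-1, by omega⟩ (by omega)]
    ring

noncomputable def Pf (k : ℕ) (u : ℝ) : ℝ :=
  ∑ j ∈ Finset.range (k + 1),
    (bernoulli (2 * j) : ℝ) * (2 - 2 ^ (2 * j)) * (1 - u) ^ (2 * k - 2 * j) /
      ((Nat.factorial (2 * j)) * (Nat.factorial (2 * k - 2 * j)))

noncomputable def Qf (k : ℕ) (u : ℝ) : ℝ :=
  -∑ j ∈ Finset.range k,
    (bernoulli (2 * j) : ℝ) * (2 - 2 ^ (2 * j)) * (1 - u) ^ (2 * k - 2 * j - 1) /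
      ((Nat.factorial (2 * j)) * (Nat.factorial (2 * k - 2 * j - 1)))

lemma Pf_continuous (k : ℕ) : Continuous (Pf k) := by
  unfold Pf; fun_prop

lemma Qf_continuous (k : ℕ) : Continuous (Qf k) := by
  unfold Qf; fun_prop

lemma Pf_zero (u : ℝ) : Pf 0 u = 1 := by
  norm_num [Pf]

lemma hasDerivAt_one_sub_pow (e : ℕ) (u : ℝ) :
    HasDerivAt (fun x : ℝ => (1 - x) ^ e) (-((e : ℝ) * (1 - u) ^ (e - 1))) u := by
  have h1 : HasDerivAt (fun x : ℝ => 1 - x) (-1) u := by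
    simpa using ((hasDerivAt_id u).const_sub 1)
  have := h1.fun_pow e
  simpa [mul_comm, mul_assoc, mul_left_comm] using this

lemma hasDerivAt_Pf (k : ℕ) (hk : 0 < k) (u : ℝ) :
    HasDerivAt (Pf k) (Qf k u) u := by
  have hsum : HasDerivAt (fun x => Pf k x)
      (∑ j ∈ Finset.range (k + 1),
        (bernoulli (2 * j) : ℝ) * (2 - 2 ^ (2 * j)) *
          -(((2 * k - 2 * j : ℕ) : ℝ) * (1 - u) ^ (2 * k - 2 * j - 1)) /
          ((Nat.factorial (2 * j)) * (Nat.factorial (2 * k - 2 * j)))) u := by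
    unfold Pf
    refine HasDerivAt.fun_sum fun j _ => ?_
    exact ((hasDerivAt_one_sub_pow (2 * k - 2 * j) u).const_mul
      ((bernoulli (2 * j) : ℝ) * (2 - 2 ^ (2 * j)))).div_const _
  convert hsum using 1
  rw [Qf, Finset.sum_range_succ]
  have hlast : (bernoulli (2 * k) : ℝ) * (2 - 2 ^ (2 * k)) *
      -(((2 * k - 2 * k : ℕ) : ℝ) * (1 - u) ^ (2 * k - 2 * k - 1)) /
      ((Nat.factorial (2 * k)) * (Nat.factorial (2 * k - 2 * k))) = 0 := by
    simp
  rw [hlast, add_zero, ← Finset.sum_neg_distrib]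
  refine Finset.sum_congr rfl fun j hj => ?_
  rw [Finset.mem_range] at hj
  obtain ⟨d, hd⟩ : ∃ d, 2 * k - 2 * j = d + 1 := ⟨2 * k - 2 * j - 1, by omega⟩
  rw [hd]
  simp only [Nat.add_sub_cancel]
  rw [Nat.factorial_succ]
  have h2 : ((d.factorial : ℝ)) ≠ 0 := by positivity
  have h3 : ((Nat.factorial (2 * j) : ℝ)) ≠ 0 := by positivity
  push_cast
  field_simp

lemma hasDerivAt_Qf (k : ℕ) (hk : 0 < k) (u : ℝ) :
    HasDerivAt (Qf k) (Pf (k - 1) u) u := by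
  have hsum : HasDerivAt (fun x => Qf k x)
      (-∑ j ∈ Finset.range k,
        (bernoulli (2 * j) : ℝ) * (2 - 2 ^ (2 * j)) *
          -(((2 * k - 2 * j - 1 : ℕ) : ℝ) * (1 - u) ^ (2 * k - 2 * j - 1 - 1)) /
          ((Nat.factorial (2 * j)) * (Nat.factorial (2 * k - 2 * j - 1)))) u := by
    unfold Qf
    refine HasDerivAt.neg ?_
    refine HasDerivAt.fun_sum fun j _ => ?_
    exact ((hasDerivAt_one_sub_pow (2 * k - 2 * j - 1) u).const_mul
      ((bernoulli (2 * j) : ℝ) * (2 - 2 ^ (2 * j)))).div_const _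
  convert hsum using 1
  rw [Pf, ← Finset.sum_neg_distrib]
  rw [show k - 1 + 1 = k by omega]
  refine Finset.sum_congr rfl fun j hj => ?_
  rw [Finset.mem_range] at hj
  obtain ⟨d, hd⟩ : ∃ d, 2 * k - 2 * j - 1 = d + 1 := ⟨2 * k - 2 * j - 2, by omega⟩
  have hd2 : 2 * (k - 1) - 2 * j = d := by omega
  rw [hd, hd2]
  simp only [Nat.add_sub_cancel]
  rw [Nat.factorial_succ]
  have h2 : ((d.factorial : ℝ)) ≠ 0 := by positivity
  have h3 : ((Nat.factorial (2 * j) : ℝ)) ≠ 0 := by positivity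
  push_cast
  field_simp
lemma Qf_one (k : ℕ) (hk : 0 < k) : Qf k 1 = 0 := by
  rw [Qf, neg_eq_zero]
  refine Finset.sum_eq_zero fun j hj => ?_
  rw [Finset.mem_range] at hj
  rw [sub_self, zero_pow (by omega : 2 * k - 2 * j - 1 ≠ 0)]
  simp

lemma Qf_zero (k : ℕ) (hk : 0 < k) : Qf k 0 = if k = 1 then -1 else 0 := by
  have hfacne : (Nat.factorial (2 * k - 1) : ℝ) ≠ 0 := by positivity
  have hBR : ∑ j ∈ Finset.range k,
      ((2 * k - 1).choose (2 * j) : ℝ) * (2 - 2 ^ (2 * j)) * (bernoulli (2 * j) : ℝ)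
      = if k = 1 then 1 else 0 := by
    have hB := lemB k hk
    have := congrArg (fun q : ℚ => (q : ℝ)) hB
    push_cast at this
    split_ifs at this ⊢ with h1
    · exact_mod_cast this
    · exact_mod_cast this
  have hmul : (∑ j ∈ Finset.range k,
      (bernoulli (2 * j) : ℝ) * (2 - 2 ^ (2 * j)) /
        ((Nat.factorial (2 * j)) * (Nat.factorial (2 * k - 2 * j - 1)))) *
        (Nat.factorial (2 * k - 1))
      = ∑ j ∈ Finset.range k,
        ((2 * k - 1).choose (2 * j) : ℝ) * (2 - 2 ^ (2 * j)) * (bernoulli (2 * j) : ℝ) := by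
    rw [Finset.sum_mul]
    refine Finset.sum_congr rfl fun j hj => ?_
    rw [Finset.mem_range] at hj
    have hle : 2 * j ≤ 2 * k - 1 := by omega
    have hch := Nat.choose_mul_factorial_mul_factorial hle
    have hchR : ((2 * k - 1).choose (2 * j) : ℝ) * (Nat.factorial (2 * j)) *
        (Nat.factorial (2 * k - 1 - 2 * j)) = (Nat.factorial (2 * k - 1)) := by
      exact_mod_cast hch
    rw [show 2 * k - 1 - 2 * j = 2 * k - 2 * j - 1 from by omega] at hchR
    have h1 : (Nat.factorial (2 * j) : ℝ) ≠ 0 := by positivity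
    have h2 : (Nat.factorial (2 * k - 2 * j - 1) : ℝ) ≠ 0 := by positivity
    rw [← hchR]
    field_simp
  rw [Qf]
  simp only [sub_zero, one_pow, mul_one]
  have hS : (∑ j ∈ Finset.range k,
      (bernoulli (2 * j) : ℝ) * (2 - 2 ^ (2 * j)) /
        ((Nat.factorial (2 * j)) * (Nat.factorial (2 * k - 2 * j - 1))))
      = (if k = 1 then 1 else 0) / (Nat.factorial (2 * k - 1)) := by
    rw [eq_div_iff hfacne, hmul, hBR]
  rw [hS]
  split_ifs with h1
  · subst h1; norm_num
  · simp
lemma integral_cos_int (c : ℝ) (hc : c ≠ 0) (hsc : Real.sin c = 0) :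
    ∫ u in (0:ℝ)..1, Real.cos (c * u) = 0 := by
  rw [intervalIntegral.integral_comp_mul_left (fun x => Real.cos x) hc]
  simp [integral_cos, hsc]

lemma two_pi_int_ne (m : ℤ) (hm : m ≠ 0) : (2 * π * (m : ℝ)) ≠ 0 := by
  have := Real.pi_ne_zero
  have hm' : (m : ℝ) ≠ 0 := Int.cast_ne_zero.mpr hm
  positivity

lemma sin_two_pi_int (m : ℤ) : Real.sin (2 * π * (m : ℝ)) = 0 := by
  have := Real.sin_int_mul_pi (2 * m)
  push_cast at this
  rw [show 2 * π * (m : ℝ) = (2 : ℝ) * (m : ℝ) * π by ring]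
  exact this

lemma Jstep (k : ℕ) (hk : 0 < k) (c : ℝ) (hc : c ≠ 0) (hsc : Real.sin c = 0) :
    ∫ u in (0:ℝ)..1, Pf k u * Real.cos (c * u)
      = -(Qf k 0 + ∫ u in (0:ℝ)..1, Pf (k - 1) u * Real.cos (c * u)) / c ^ 2 := by
  have hsin : ∀ x : ℝ, HasDerivAt (fun t => Real.sin (c * t) / c) (Real.cos (c * x)) x := by
    intro x
    have h0 : HasDerivAt (fun t : ℝ => c * t) c x := by simpa using (hasDerivAt_id x).const_mul c
    have h1 := (Real.hasDerivAt_sin (c * x)).comp x h0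
    have h2 := h1.div_const c
    refine h2.congr_deriv ?_
    rw [div_eq_iff hc]
  have hcos : ∀ x : ℝ, HasDerivAt (fun t => -Real.cos (c * t) / c) (Real.sin (c * x)) x := by
    intro x
    have h0 : HasDerivAt (fun t : ℝ => c * t) c x := by simpa using (hasDerivAt_id x).const_mul c
    have h1 := ((Real.hasDerivAt_cos (c * x)).comp x h0).neg.div_const c
    refine h1.congr_deriv ?_
    rw [div_eq_iff hc]; ring
  have ibp1 := intervalIntegral.integral_mul_deriv_eq_deriv_mul
    (fun x _ => hasDerivAt_Pf k hk x) (fun x _ => hsin x)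
    ((Qf_continuous k).intervalIntegrable 0 1)
    (Continuous.intervalIntegrable (by fun_prop) 0 1)
  have ibp2 := intervalIntegral.integral_mul_deriv_eq_deriv_mul
    (fun x _ => hasDerivAt_Qf k hk x) (fun x _ => hcos x)
    ((Pf_continuous (k - 1)).intervalIntegrable 0 1)
    (Continuous.intervalIntegrable (by fun_prop) 0 1)
  rw [ibp1]
  have e1 : (fun x => Qf k x * (Real.sin (c * x) / c)) = fun x => (Qf k x * Real.sin (c * x)) / c := by
    funext x; ring
  rw [show ∫ x in (0:ℝ)..1, Qf k x * (Real.sin (c * x) / c)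
      = (∫ x in (0:ℝ)..1, Qf k x * Real.sin (c * x)) / c by
    rw [← intervalIntegral.integral_div]; exact intervalIntegral.integral_congr fun x _ => by ring]
  rw [ibp2]
  rw [show ∫ x in (0:ℝ)..1, Pf (k - 1) x * (-Real.cos (c * x) / c)
      = -((∫ x in (0:ℝ)..1, Pf (k - 1) x * Real.cos (c * x)) / c) by
    rw [intervalIntegral.integral_congr (g := fun x => (-(Pf (k - 1) x * Real.cos (c * x))) / c)
      (fun x _ => by ring), intervalIntegral.integral_div, intervalIntegral.integral_neg, neg_div]]
  rw [mul_one, mul_zero, hsc, Qf_one k hk]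
  norm_num [Real.sin_zero, Real.cos_zero]
  ring

lemma Jval (m : ℤ) (hm : m ≠ 0) : ∀ k : ℕ, 0 < k →
    ∫ u in (0:ℝ)..1, Pf k u * Real.cos (2 * π * (m : ℝ) * u)
      = (-1) ^ (k + 1) / (2 * π * (m : ℝ)) ^ (2 * k) := by
  have hc := two_pi_int_ne m hm
  have hsc := sin_two_pi_int m
  have hsc' : Real.sin (2 * π * (m : ℝ) * 1) = 0 := by rw [mul_one]; exact hsc
  intro k
  induction k with
  | zero => omega
  | succ k ih =>
    intro _
    rw [Jstep (k + 1) (Nat.succ_pos k) _ hc hsc]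
    simp only [Nat.add_sub_cancel]
    rcases Nat.eq_zero_or_pos k with rfl | hk'
    · rw [Qf_zero 1 one_pos]
      have h0 : ∫ u in (0:ℝ)..1, Pf 0 u * Real.cos (2 * π * (m : ℝ) * u) = 0 := by
        simp only [Pf_zero, one_mul]
        exact integral_cos_int _ hc hsc
      rw [h0]
      norm_num
    · rw [ih hk', Qf_zero (k + 1) (Nat.succ_pos k), if_neg (by omega)]
      have hpow : (2 * π * (m : ℝ)) ^ (2 * (k + 1)) = (2 * π * (m : ℝ)) ^ (2 * k) * (2 * π * (m : ℝ)) ^ 2 := by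
        rw [← pow_add]; ring_nf
      rw [hpow]
      have h1 : ((-1 : ℝ)) ^ (k + 1 + 1) = -(-1) ^ (k + 1) := by rw [pow_succ]; ring
      field_simp
      rw [h1]
      ring
lemma cot_step (t X : ℝ) (hs : Real.sin t ≠ 0) :
    (Real.sin (X + 2 * t) - Real.sin X) * Real.cot t = Real.cos (X + 2 * t) + Real.cos X := by
  rw [Real.cot_eq_cos_div_sin, Real.sin_add, Real.cos_add, Real.sin_two_mul, Real.cos_two_mul]
  field_simp
  linear_combination (2 * Real.cos t * Real.sin X) * Real.sin_sq_add_cos_sq t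

lemma telescope (a b : ℤ) (u : ℝ) (hs : Real.sin (π * a * u) ≠ 0) : ∀ n : ℕ,
    (Real.sin (2 * π * ((a : ℝ) * n + b) * u) - Real.sin (2 * π * (b : ℝ) * u)) * Real.cot (π * a * u)
      = ∑ j ∈ Finset.Icc 1 n,
          (Real.cos (2 * π * ((a : ℝ) * j + b) * u) + Real.cos (2 * π * ((a : ℝ) * (↑(j - 1) : ℝ) + b) * u))
  | 0 => by simp
  | (n + 1) => by
      rw [Finset.sum_Icc_succ_top (Nat.one_le_iff_ne_zero.mpr (Nat.succ_ne_zero n)),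
        ← telescope a b u hs n]
      simp only [Nat.add_sub_cancel]
      have harg : 2 * π * ((a : ℝ) * (↑(n + 1) : ℝ) + b) * u
          = 2 * π * ((a : ℝ) * n + b) * u + 2 * (π * a * u) := by push_cast; ring
      rw [harg]
      have hstep := cot_step (π * a * u) (2 * π * ((a : ℝ) * n + b) * u) hs
      linear_combination hstep

lemma sin_zero_set_null (a : ℤ) (ha : a ≠ 0) :
    MeasureTheory.volume {u : ℝ | Real.sin (π * a * u) = 0} = 0 := by
  have haR : (a : ℝ) ≠ 0 := Int.cast_ne_zero.mpr ha
  have hπ : π ≠ 0 := Real.pi_ne_zero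
  have hsub : {u : ℝ | Real.sin (π * a * u) = 0} ⊆ Set.range (fun i : ℤ => (i : ℝ) / a) := by
    intro u hu
    rw [Set.mem_setOf_eq, Real.sin_eq_zero_iff] at hu
    obtain ⟨i, hi⟩ := hu
    refine ⟨i, ?_⟩
    have h2 : (i : ℝ) = (a : ℝ) * u := by
      have h3 : π * (i : ℝ) = π * ((a : ℝ) * u) := by linarith [hi]
      exact mul_left_cancel₀ hπ h3
    field_simp
    linarith [h2]
  exact MeasureTheory.measure_mono_null hsub ((Set.countable_range _).measure_zero _)

lemma sum_shift (g : ℕ → ℝ) : ∀ n : ℕ,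
    ∑ j ∈ Finset.Icc 1 n, (g j + g (j - 1))
      = 2 * ∑ j ∈ Finset.Icc 1 n, g j + g 0 - g n
  | 0 => by simp
  | (n + 1) => by
      rw [Finset.sum_Icc_succ_top (Nat.one_le_iff_ne_zero.mpr (Nat.succ_ne_zero n)),
        Finset.sum_Icc_succ_top (Nat.one_le_iff_ne_zero.mpr (Nat.succ_ne_zero n)),
        sum_shift g n]
      simp only [Nat.add_sub_cancel]
      ring
theorem stmt_7 (a b : ℤ) (ha : a ≠ 0) (hb : b ≠ 0) (n : ℕ) (hn : 0 < n)
    (h : ∀ j : ℤ, 1 ≤ j → j ≤ n → a * j + b ≠ 0) (k : ℕ) (hk : 0 < k) :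
    ∑ j ∈ Finset.Icc 1 n, (1 : ℝ) / (a * j + b) ^ (2 * k) =
      -(1 / (2 * (b : ℝ) ^ (2 * k))) + 1 / (2 * ((a : ℝ) * n + b) ^ (2 * k))
      - ((-1 : ℝ) ^ k * (2 * π) ^ (2 * k) / 2) *
          ∫ u in (0:ℝ)..1,
            (∑ j ∈ Finset.range (k + 1),
                (bernoulli (2 * j) : ℝ) * (2 - 2 ^ (2 * j)) * (1 - u) ^ (2 * k - 2 * j) /
                  ((Nat.factorial (2 * j)) * (Nat.factorial (2 * k - 2 * j)))) *
              (Real.sin (2 * π * (a * n + b) * u) - Real.sin (2 * π * b * u)) *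
              Real.cot (π * a * u) := by
  have haR : (a : ℝ) ≠ 0 := Int.cast_ne_zero.mpr ha
  set g : ℕ → ℝ := fun j => (-1) ^ (k + 1) / (2 * π * ((a : ℝ) * j + b)) ^ (2 * k) with hgdef
  -- Step 1: the integral equals 2*∑ g + g 0 - g n
  have hint : (∫ u in (0:ℝ)..1,
            (∑ j ∈ Finset.range (k + 1),
                (bernoulli (2 * j) : ℝ) * (2 - 2 ^ (2 * j)) * (1 - u) ^ (2 * k - 2 * j) /
                  ((Nat.factorial (2 * j)) * (Nat.factorial (2 * k - 2 * j)))) *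
              (Real.sin (2 * π * (a * n + b) * u) - Real.sin (2 * π * b * u)) *
              Real.cot (π * a * u))
      = 2 * ∑ j ∈ Finset.Icc 1 n, g j + g 0 - g n := by
    have hae : (∫ u in (0:ℝ)..1,
            (∑ j ∈ Finset.range (k + 1),
                (bernoulli (2 * j) : ℝ) * (2 - 2 ^ (2 * j)) * (1 - u) ^ (2 * k - 2 * j) /
                  ((Nat.factorial (2 * j)) * (Nat.factorial (2 * k - 2 * j)))) *
              (Real.sin (2 * π * (a * n + b) * u) - Real.sin (2 * π * b * u)) *
              Real.cot (π * a * u))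
        = ∫ u in (0:ℝ)..1, Pf k u * ∑ j ∈ Finset.Icc 1 n,
            (Real.cos (2 * π * ((a : ℝ) * j + b) * u)
              + Real.cos (2 * π * ((a : ℝ) * (↑(j - 1) : ℝ) + b) * u)) := by
      apply intervalIntegral.integral_congr_ae
      rw [MeasureTheory.ae_iff]
      refine MeasureTheory.measure_mono_null ?_ (sin_zero_set_null a ha)
      intro u hu
      simp only [Set.mem_setOf_eq] at hu ⊢
      by_contra hsin
      apply hu
      intro _
      rw [mul_assoc, telescope a b u hsin n]
      rfl
    rw [hae]
    have hswap : (∫ u in (0:ℝ)..1, Pf k u * ∑ j ∈ Finset.Icc 1 n,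
            (Real.cos (2 * π * ((a : ℝ) * j + b) * u)
              + Real.cos (2 * π * ((a : ℝ) * (↑(j - 1) : ℝ) + b) * u)))
        = ∑ j ∈ Finset.Icc 1 n,
            ((∫ u in (0:ℝ)..1, Pf k u * Real.cos (2 * π * ((a : ℝ) * j + b) * u))
              + ∫ u in (0:ℝ)..1, Pf k u * Real.cos (2 * π * ((a : ℝ) * (↑(j - 1) : ℝ) + b) * u)) := by
      rw [intervalIntegral.integral_congr
        (g := fun u => ∑ j ∈ Finset.Icc 1 n,
          (Pf k u * Real.cos (2 * π * ((a : ℝ) * j + b) * u)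
            + Pf k u * Real.cos (2 * π * ((a : ℝ) * (↑(j - 1) : ℝ) + b) * u)))
        (fun u _ => by rw [Finset.mul_sum]; exact Finset.sum_congr rfl fun j _ => by ring)]
      rw [intervalIntegral.integral_finset_sum (f := fun (j : ℕ) u =>
          Pf k u * Real.cos (2 * π * ((a : ℝ) * j + b) * u)
            + Pf k u * Real.cos (2 * π * ((a : ℝ) * (↑(j - 1) : ℝ) + b) * u)) (fun j _ =>
        Continuous.intervalIntegrable (((Pf_continuous k).mul (by fun_prop)).add
          ((Pf_continuous k).mul (by fun_prop))) 0 1)]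
      exact Finset.sum_congr rfl fun j _ => intervalIntegral.integral_add
        (Continuous.intervalIntegrable ((Pf_continuous k).mul (by fun_prop)) 0 1)
        (Continuous.intervalIntegrable ((Pf_continuous k).mul (by fun_prop)) 0 1)
    rw [hswap]
    have heval : ∑ j ∈ Finset.Icc 1 n,
            ((∫ u in (0:ℝ)..1, Pf k u * Real.cos (2 * π * ((a : ℝ) * j + b) * u))
              + ∫ u in (0:ℝ)..1, Pf k u * Real.cos (2 * π * ((a : ℝ) * (↑(j - 1) : ℝ) + b) * u))
        = ∑ j ∈ Finset.Icc 1 n, (g j + g (j - 1)) := by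
      refine Finset.sum_congr rfl fun j hj => ?_
      rw [Finset.mem_Icc] at hj
      have hm1 : a * (j : ℤ) + b ≠ 0 := h j (by exact_mod_cast hj.1) (by exact_mod_cast hj.2)
      have hm2 : a * ((j - 1 : ℕ) : ℤ) + b ≠ 0 := by
        by_cases hj1 : j = 1
        · subst hj1; simpa using hb
        · exact h ((j - 1 : ℕ) : ℤ) (by push_cast; omega) (by push_cast; omega)
      have hJ1 := Jval (a * j + b) hm1 k hk
      have hJ2 := Jval (a * ((j - 1 : ℕ) : ℤ) + b) hm2 k hk
      push_cast at hJ1 hJ2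
      rw [hgdef]
      rw [hJ1, hJ2]
    rw [heval, sum_shift g n]
  rw [hint]
  -- Step 2: final algebra
  have h2π : (2 * π) ≠ 0 := by positivity
  have hCg : ∀ m : ℝ, m ≠ 0 →
      ((-1 : ℝ) ^ k * (2 * π) ^ (2 * k) / 2) * ((-1) ^ (k + 1) / (2 * π * m) ^ (2 * k))
        = -(1 / (2 * m ^ (2 * k))) := by
    intro m hm
    have hsign : ((-1 : ℝ)) ^ k * (-1) ^ (k + 1) = -1 := by
      rw [← pow_add]; exact Odd.neg_one_pow ⟨k, by ring⟩
    have hne1 : (2 * ((2 * π) ^ (2 * k) * m ^ (2 * k))) ≠ 0 :=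
      mul_ne_zero two_ne_zero (mul_ne_zero (pow_ne_zero _ h2π) (pow_ne_zero _ hm))
    have hne2 : (2 * m ^ (2 * k)) ≠ 0 := mul_ne_zero two_ne_zero (pow_ne_zero _ hm)
    rw [show (2 * π * m) ^ (2 * k) = (2 * π) ^ (2 * k) * m ^ (2 * k) from mul_pow _ _ _,
      div_mul_div_comm,
      show (-1:ℝ) ^ k * (2 * π) ^ (2 * k) * (-1) ^ (k + 1) = -((2 * π) ^ (2 * k)) by
        linear_combination (2 * π) ^ (2 * k) * hsign,
      neg_div,
      show ((2 * π) ^ (2 * k)) / (2 * ((2 * π) ^ (2 * k) * m ^ (2 * k))) = 1 / (2 * m ^ (2 * k)) by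
        rw [div_eq_div_iff hne1 hne2]; ring]
  have hbR : (b : ℝ) ≠ 0 := Int.cast_ne_zero.mpr hb
  have hmnZ : a * (n : ℤ) + b ≠ 0 := h n (by exact_mod_cast hn) le_rfl
  have hmnR : ((a : ℝ) * n + b) ≠ 0 := by
    intro h0
    apply hmnZ
    exact_mod_cast (by push_cast; linarith : ((a * (n : ℤ) + b : ℤ) : ℝ) = 0)
  have hg0 : ((-1 : ℝ) ^ k * (2 * π) ^ (2 * k) / 2) * g 0 = -(1 / (2 * (b : ℝ) ^ (2 * k))) := by
    rw [hgdef]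
    simp only [Nat.cast_zero, mul_zero, zero_add]
    exact hCg b hbR
  have hgn : ((-1 : ℝ) ^ k * (2 * π) ^ (2 * k) / 2) * g n
      = -(1 / (2 * ((a : ℝ) * n + b) ^ (2 * k))) := by
    rw [hgdef]
    exact hCg _ hmnR
  have hgsum : ((-1 : ℝ) ^ k * (2 * π) ^ (2 * k) / 2) * (2 * ∑ j ∈ Finset.Icc 1 n, g j)
      = ∑ j ∈ Finset.Icc 1 n, -((1 : ℝ) / ((a : ℝ) * j + b) ^ (2 * k)) := by
    rw [Finset.mul_sum, Finset.mul_sum]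
    refine Finset.sum_congr rfl fun j hj => ?_
    rw [Finset.mem_Icc] at hj
    have hmZ : a * (j : ℤ) + b ≠ 0 := h j (by exact_mod_cast hj.1) (by exact_mod_cast hj.2)
    have hmR : ((a : ℝ) * j + b) ≠ 0 := by
      intro h0
      apply hmZ
      exact_mod_cast (by push_cast; linarith : ((a * (j : ℤ) + b : ℤ) : ℝ) = 0)
    have := hCg _ hmR
    rw [hgdef]
    calc ((-1 : ℝ) ^ k * (2 * π) ^ (2 * k) / 2) * (2 * ((-1) ^ (k + 1) / (2 * π * ((a : ℝ) * j + b)) ^ (2 * k)))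
        = 2 * (((-1 : ℝ) ^ k * (2 * π) ^ (2 * k) / 2) * ((-1) ^ (k + 1) / (2 * π * ((a : ℝ) * j + b)) ^ (2 * k))) := by ring
      _ = 2 * (-(1 / (2 * ((a : ℝ) * j + b) ^ (2 * k)))) := by rw [this]
      _ = -(1 / ((a : ℝ) * j + b) ^ (2 * k)) := by ring
  rw [mul_sub, mul_add, hgsum, hg0, hgn, Finset.sum_neg_distrib]
  ring
end

section
/- Let a and b be nonzero integers, n a positive integer such that aj + b ≠ 0 for every integer j with 1 ≤ j ≤ n, and k a nonnegative integer. Then ∑_{j=1}^{n} 1/(aj+b)^{2k+1} = -1/(2b^{2k+1}) + 1/(2(an+b)^{2k+1}) - ((-1)^{k}(2π)^{2k+1}/2) ∫_{0}^{1} [ ∑_{j=0}^{k} B_{2j}(2-2^{2j})(1-u)^{2k+1-2j}/((2j)!(2k+1-2j)!) ]·( cos(2π(an+b)u) - cos(2πbu) )·cot(πau) du. -/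
open Real Finset PowerSeries intervalIntegral

lemma aux_F_even :
    rescale (-1 : ℚ) (rescale 2 (bernoulliPowerSeries ℚ) * exp ℚ) =
      rescale 2 (bernoulliPowerSeries ℚ) * exp ℚ := by
  set B := bernoulliPowerSeries ℚ with hB
  have hcancel : (rescale (2:ℚ) (exp ℚ) - 1) ≠ 0 := by
    intro hcon
    have := congrArg (coeff 1) hcon
    simp [coeff_rescale, coeff_exp] at this
  apply mul_right_cancel₀ hcancel
  have hkey : B * (exp ℚ - 1) = X := bernoulliPowerSeries_mul_exp_sub_one ℚ
  have h2 : rescale (2:ℚ) B * (rescale (2:ℚ) (exp ℚ) - 1) = C (2:ℚ) * X := by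
    rw [← rescale_X (2:ℚ), ← hkey]
    rw [map_mul, map_sub, map_one]
  have hm2 : rescale (-2:ℚ) B * (rescale (-2:ℚ) (exp ℚ) - 1) = C (-2:ℚ) * X := by
    rw [← rescale_X (-2:ℚ), ← hkey]
    rw [map_mul, map_sub, map_one]
  have hInv : rescale (2:ℚ) (exp ℚ) * rescale (-2:ℚ) (exp ℚ) = 1 := by
    rw [exp_mul_exp_eq_exp_add]
    norm_num [rescale_zero]
  have hflip : (rescale (2:ℚ) (exp ℚ) - 1) =
      -(rescale (2:ℚ) (exp ℚ)) * (rescale (-2:ℚ) (exp ℚ) - 1) := by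
    ring_nf
    rw [hInv]; ring
  calc rescale (-1:ℚ) (rescale 2 B * exp ℚ) * (rescale (2:ℚ) (exp ℚ) - 1)
      = (rescale (-2:ℚ) B * rescale (-1:ℚ) (exp ℚ)) * (rescale (2:ℚ) (exp ℚ) - 1) := by
        rw [map_mul, rescale_rescale]; norm_num
    _ = (rescale (-2:ℚ) B * (rescale (-2:ℚ) (exp ℚ) - 1)) *
          (-(rescale (-1:ℚ) (exp ℚ) * rescale (2:ℚ) (exp ℚ))) := by rw [hflip]; ring
    _ = (C (-2:ℚ) * X) * (-(rescale (1:ℚ) (exp ℚ))) := by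
        rw [hm2, exp_mul_exp_eq_exp_add]; norm_num
    _ = (C (2:ℚ) * X) * exp ℚ := by
        simp only [rescale_one, RingHom.id_apply, map_neg]; ring
    _ = rescale 2 B * exp ℚ * (rescale (2:ℚ) (exp ℚ) - 1) := by rw [← h2]; ring

lemma aux_W_odd (n : ℕ) (hn : Odd n) :
    ∑ i ∈ range (n + 1), (n.choose i : ℚ) * bernoulli i * 2 ^ i = 0 := by
  have hF := aux_F_even
  have hc := congrArg (coeff n) hF
  rw [coeff_rescale] at hc
  have hneg : (-1 : ℚ) ^ n = -1 := hn.neg_one_pow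
  rw [hneg] at hc
  have hzero : coeff n (rescale 2 (bernoulliPowerSeries ℚ) * exp ℚ) = 0 := by linarith
  rw [coeff_mul, Finset.Nat.sum_antidiagonal_eq_sum_range_succ_mk] at hzero
  have hexp : ∀ i ∈ range (n + 1),
      coeff (i, n - i).1 (rescale 2 (bernoulliPowerSeries ℚ)) * coeff (i, n - i).2 (exp ℚ)
        = 2 ^ i * (bernoulli i / i.factorial) * (1 / (n - i).factorial) := by
    intro i _
    rw [coeff_rescale, bernoulliPowerSeries, coeff_mk, coeff_exp]
    simp [algebraMap]
  rw [Finset.sum_congr rfl hexp] at hzero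
  have hfac : (n.factorial : ℚ) ≠ 0 := Nat.cast_ne_zero.2 n.factorial_ne_zero
  have := congrArg (fun x => (n.factorial : ℚ) * x) hzero
  simp only [mul_zero, Finset.mul_sum] at this
  rw [← this]
  apply Finset.sum_congr rfl
  intro i hi
  have hile : i ≤ n := Nat.lt_succ_iff.mp (Finset.mem_range.mp hi)
  rw [Nat.cast_choose ℚ hile]
  have h1 : (i.factorial : ℚ) ≠ 0 := Nat.cast_ne_zero.2 i.factorial_ne_zero
  have h2 : ((n - i).factorial : ℚ) ≠ 0 := Nat.cast_ne_zero.2 (n - i).factorial_ne_zero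
  field_simp

lemma aux_V_odd (n : ℕ) (hn : Odd n) (h1 : 1 < n) :
    ∑ i ∈ range (n + 1), (n.choose i : ℚ) * bernoulli i = 0 := by
  rw [Finset.sum_range_succ, sum_bernoulli]
  have : bernoulli n = 0 := by
    rw [bernoulli_eq_bernoulli'_of_ne_one (by omega)]
    exact bernoulli'_eq_zero_of_odd hn h1
  simp [this, Nat.ne_of_gt h1, (by omega : n ≠ 1)]

lemma aux_split (g : ℕ → ℚ) (hodd : ∀ i, Odd i → g i = 0) (m : ℕ) :
    ∑ i ∈ range (2 * m + 2), g i = ∑ j ∈ range (m + 1), g (2 * j) := by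
  induction m with
  | zero => simp [Finset.sum_range_succ, hodd 1 ⟨0, rfl⟩]
  | succ m ih =>
      have h2 : 2 * (m + 1) + 2 = (2 * m + 2) + 1 + 1 := by ring
      rw [h2, Finset.sum_range_succ, Finset.sum_range_succ, ih,
        Finset.sum_range_succ (f := fun j => g (2 * j)) (n := m + 1)]
      have ho : g (2 * m + 2 + 1) = 0 := hodd _ ⟨m + 1, by ring⟩
      have he : 2 * (m + 1) = 2 * m + 2 := by ring
      rw [ho, he]; ring

lemma aux_A_zero (m : ℕ) (hm : m ≠ 0) :
    ∑ j ∈ range (m + 1),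
      (bernoulli (2 * j) : ℚ) * (2 - 2 ^ (2 * j)) /
        ((2 * j).factorial * (2 * m + 1 - 2 * j).factorial) = 0 := by
  set n := 2 * m + 1 with hn
  have hodd : Odd n := ⟨m, by omega⟩
  have h1n : 1 < n := by omega
  have key : ∑ i ∈ range (n + 1), (n.choose i : ℚ) * bernoulli i * (2 - 2 ^ i) = 0 := by
    have hsplit : ∀ i ∈ range (n + 1), (n.choose i : ℚ) * bernoulli i * (2 - 2 ^ i) =
        2 * ((n.choose i : ℚ) * bernoulli i) - (n.choose i : ℚ) * bernoulli i * 2 ^ i := by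
      intro i _; ring
    rw [Finset.sum_congr rfl hsplit, Finset.sum_sub_distrib, ← Finset.mul_sum,
      aux_V_odd n hodd h1n, aux_W_odd n hodd]
    ring
  have hvanish : ∀ i, Odd i → (n.choose i : ℚ) * bernoulli i * (2 - 2 ^ i) = 0 := by
    intro i hi
    rcases eq_or_ne i 1 with rfl | hne
    · norm_num
    · have : bernoulli i = 0 := by
        rw [bernoulli_eq_bernoulli'_of_ne_one hne]
        exact bernoulli'_eq_zero_of_odd hi (by rcases hi with ⟨t, rfl⟩; omega)
      simp [this]
  have heven : ∑ j ∈ range (m + 1), (n.choose (2 * j) : ℚ) * bernoulli (2 * j) * (2 - 2 ^ (2 * j)) = 0 := by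
    rw [← aux_split _ hvanish m, show 2 * m + 2 = n + 1 by omega, key]
  have hfac : (n.factorial : ℚ) ≠ 0 := Nat.cast_ne_zero.2 n.factorial_ne_zero
  have hterm : ∀ j ∈ range (m + 1),
      (n.factorial : ℚ) * ((bernoulli (2 * j) : ℚ) * (2 - 2 ^ (2 * j)) /
        ((2 * j).factorial * (2 * m + 1 - 2 * j).factorial)) =
      (n.choose (2 * j) : ℚ) * bernoulli (2 * j) * (2 - 2 ^ (2 * j)) := by
    intro j hj
    have hle : 2 * j ≤ n := by have := Finset.mem_range.mp hj; omega
    rw [Nat.cast_choose ℚ hle]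
    have h1 : ((2 * j).factorial : ℚ) ≠ 0 := Nat.cast_ne_zero.2 (2 * j).factorial_ne_zero
    have h2 : ((n - 2 * j).factorial : ℚ) ≠ 0 := Nat.cast_ne_zero.2 (n - 2 * j).factorial_ne_zero
    rw [show 2 * m + 1 - 2 * j = n - 2 * j from rfl]
    field_simp
  have hmul : (n.factorial : ℚ) * (∑ j ∈ range (m + 1),
      (bernoulli (2 * j) : ℚ) * (2 - 2 ^ (2 * j)) /
        ((2 * j).factorial * (2 * m + 1 - 2 * j).factorial)) = 0 := by
    rw [Finset.mul_sum, Finset.sum_congr rfl hterm, heven]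
  exact (mul_eq_zero.mp hmul).resolve_left hfac

noncomputable def Pint (c : ℝ) (r : ℕ) : ℝ := ∫ u in (0:ℝ)..1, (1-u)^r * Real.sin (c*u)
noncomputable def Qint (c : ℝ) (r : ℕ) : ℝ := ∫ u in (0:ℝ)..1, (1-u)^r * Real.cos (c*u)

lemma hd_pow (r : ℕ) (x : ℝ) :
    HasDerivAt (fun u : ℝ => (1-u)^(r+1)) (((r:ℝ)+1) * (1-x)^r * (-1)) x := by
  have h : HasDerivAt (fun u : ℝ => 1-u) (-1) x := (hasDerivAt_id x).const_sub 1
  simpa using h.fun_pow (r+1)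

lemma hd_mul (c x : ℝ) : HasDerivAt (fun u : ℝ => c*u) c x := by
  simpa using (hasDerivAt_id x).const_mul c

lemma hd_cos (c : ℝ) (hc : c ≠ 0) (x : ℝ) :
    HasDerivAt (fun u : ℝ => -Real.cos (c*u)/c) (Real.sin (c*x)) x := by
  have h2 := (Real.hasDerivAt_cos (c*x)).comp x (hd_mul c x)
  have h3 := (h2.neg).div_const c
  exact h3.congr_deriv (by field_simp)

lemma hd_sin (c : ℝ) (hc : c ≠ 0) (x : ℝ) :
    HasDerivAt (fun u : ℝ => Real.sin (c*u)/c) (Real.cos (c*x)) x := by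
  have h2 := (Real.hasDerivAt_sin (c*x)).comp x (hd_mul c x)
  have h3 := h2.div_const c
  exact h3.congr_deriv (by field_simp)

lemma Pint_zero (c : ℝ) (hc : c ≠ 0) (hcos : Real.cos c = 1) : Pint c 0 = 0 := by
  unfold Pint
  have hder : ∀ x ∈ Set.uIcc (0:ℝ) 1, HasDerivAt (fun u : ℝ => -Real.cos (c*u)/c) (Real.sin (c*x)) x :=
    fun x _ => hd_cos c hc x
  rw [show (fun u : ℝ => (1-u)^0 * Real.sin (c*u)) = fun u => Real.sin (c*u) by funext; simp]
  rw [intervalIntegral.integral_eq_sub_of_hasDerivAt hder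
    (by apply Continuous.intervalIntegrable; continuity)]
  simp [hcos]

lemma Qint_zero (c : ℝ) (hc : c ≠ 0) (hsin : Real.sin c = 0) : Qint c 0 = 0 := by
  unfold Qint
  have hder : ∀ x ∈ Set.uIcc (0:ℝ) 1, HasDerivAt (fun u : ℝ => Real.sin (c*u)/c) (Real.cos (c*x)) x :=
    fun x _ => hd_sin c hc x
  rw [show (fun u : ℝ => (1-u)^0 * Real.cos (c*u)) = fun u => Real.cos (c*u) by funext; simp]
  rw [intervalIntegral.integral_eq_sub_of_hasDerivAt hder
    (by apply Continuous.intervalIntegrable; continuity)]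
  simp [hsin]

lemma Pint_succ (c : ℝ) (hc : c ≠ 0) (r : ℕ) :
    Pint c (r+1) = 1/c - ((r+1)/c) * Qint c r := by
  unfold Pint Qint
  have hparts := intervalIntegral.integral_mul_deriv_eq_deriv_mul (a := (0:ℝ)) (b := 1)
    (u := fun x : ℝ => (1-x)^(r+1)) (u' := fun x => ((r:ℝ)+1) * (1-x)^r * (-1))
    (v := fun x : ℝ => -Real.cos (c*x)/c) (v' := fun x => Real.sin (c*x))
    (fun x _ => hd_pow r x) (fun x _ => hd_cos c hc x)
    (by apply Continuous.intervalIntegrable; continuity)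
    (by apply Continuous.intervalIntegrable; continuity)
  rw [hparts]
  have h2 : ∫ x in (0:ℝ)..1, ((r:ℝ)+1) * (1-x)^r * (-1) * (-Real.cos (c*x)/c)
      = ((r+1)/c) * ∫ x in (0:ℝ)..1, (1-x)^r * Real.cos (c*x) := by
    rw [← intervalIntegral.integral_const_mul]
    congr 1; funext x; ring
  rw [h2]
  norm_num [neg_div]

lemma Qint_succ (c : ℝ) (hc : c ≠ 0) (hsin : Real.sin c = 0) (r : ℕ) :
    Qint c (r+1) = ((r+1)/c) * Pint c r := by
  unfold Pint Qint
  have hparts := intervalIntegral.integral_mul_deriv_eq_deriv_mul (a := (0:ℝ)) (b := 1)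
    (u := fun x : ℝ => (1-x)^(r+1)) (u' := fun x => ((r:ℝ)+1) * (1-x)^r * (-1))
    (v := fun x : ℝ => Real.sin (c*x)/c) (v' := fun x => Real.cos (c*x))
    (fun x _ => hd_pow r x) (fun x _ => hd_sin c hc x)
    (by apply Continuous.intervalIntegrable; continuity)
    (by apply Continuous.intervalIntegrable; continuity)
  rw [hparts]
  have h2 : ∫ x in (0:ℝ)..1, ((r:ℝ)+1) * (1-x)^r * (-1) * (Real.sin (c*x)/c)
      = -(((r+1)/c) * ∫ x in (0:ℝ)..1, (1-x)^r * Real.sin (c*x)) := by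
    rw [← intervalIntegral.integral_const_mul, ← intervalIntegral.integral_neg]
    congr 1; funext x; ring
  rw [h2]
  simp [hsin]

lemma Pint_one (c : ℝ) (hc : c ≠ 0) (hsin : Real.sin c = 0) : Pint c 1 = 1/c := by
  rw [show (1:ℕ) = 0 + 1 from rfl, Pint_succ c hc 0, Qint_zero c hc hsin]
  ring

lemma Pint_two_step (c : ℝ) (hc : c ≠ 0) (hsin : Real.sin c = 0) (r : ℕ) :
    Pint c (r+2) = 1/c - (((r:ℝ)+2)*((r:ℝ)+1)/c^2) * Pint c r := by
  rw [show r + 2 = (r+1) + 1 from rfl, Pint_succ c hc (r+1), Qint_succ c hc hsin r]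
  push_cast
  field_simp
  ring

noncomputable def Qpoly (k : ℕ) (u : ℝ) : ℝ :=
  ∑ j ∈ Finset.range (k + 1),
    (bernoulli (2 * j) : ℝ) * (2 - 2 ^ (2 * j)) * (1 - u) ^ (2 * k + 1 - 2 * j) /
      ((Nat.factorial (2 * j)) * (Nat.factorial (2 * k + 1 - 2 * j)))

lemma aux_A_zero_real (m : ℕ) (hm : m ≠ 0) :
    ∑ j ∈ range (m + 1),
      (bernoulli (2 * j) : ℝ) * (2 - 2 ^ (2 * j)) /
        ((2 * j).factorial * (2 * m + 1 - 2 * j).factorial) = 0 := by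
  have h := congrArg (fun q : ℚ => (q : ℝ)) (aux_A_zero m hm)
  push_cast at h
  convert h using 1

lemma aux_J (c : ℝ) (hc : c ≠ 0) (hsin : Real.sin c = 0) (k : ℕ) :
    ∑ j ∈ range (k + 1),
      (bernoulli (2 * j) : ℝ) * (2 - 2 ^ (2 * j)) /
        ((2 * j).factorial * (2 * k + 1 - 2 * j).factorial) * Pint c (2 * k + 1 - 2 * j)
    = (-1) ^ k / c ^ (2 * k + 1) := by
  induction k with
  | zero =>
      rw [Finset.sum_range_one]
      norm_num [Pint_one c hc hsin]
  | succ k ih =>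
      rw [Finset.sum_range_succ]
      have hlast : (bernoulli (2 * (k+1)) : ℝ) * (2 - 2 ^ (2 * (k+1))) /
            ((2 * (k+1)).factorial * (2 * (k+1) + 1 - 2 * (k+1)).factorial) *
            Pint c (2 * (k+1) + 1 - 2 * (k+1))
          = (bernoulli (2 * (k+1)) : ℝ) * (2 - 2 ^ (2 * (k+1))) /
            ((2 * (k+1)).factorial * (2 * (k+1) + 1 - 2 * (k+1)).factorial) * (1/c) := by
        rw [show 2 * (k+1) + 1 - 2 * (k+1) = 1 by omega, Pint_one c hc hsin]
      have hterm : ∀ j ∈ range (k + 1),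
          (bernoulli (2 * j) : ℝ) * (2 - 2 ^ (2 * j)) /
            ((2 * j).factorial * (2 * (k+1) + 1 - 2 * j).factorial) * Pint c (2 * (k+1) + 1 - 2 * j)
          = (bernoulli (2 * j) : ℝ) * (2 - 2 ^ (2 * j)) /
              ((2 * j).factorial * (2 * (k+1) + 1 - 2 * j).factorial) * (1/c)
            - ((bernoulli (2 * j) : ℝ) * (2 - 2 ^ (2 * j)) /
              ((2 * j).factorial * (2 * k + 1 - 2 * j).factorial) *
                Pint c (2 * k + 1 - 2 * j)) / c ^ 2 := by
        intro j hj
        have hjk : j ≤ k := by have := Finset.mem_range.mp hj; omega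
        set r := 2 * k + 1 - 2 * j with hr
        have hexp : 2 * (k+1) + 1 - 2 * j = r + 2 := by omega
        rw [hexp, Pint_two_step c hc hsin r]
        have hfac : ((r+2).factorial : ℝ) = ((r:ℝ)+2) * ((r:ℝ)+1) * (r.factorial : ℝ) := by
          rw [Nat.factorial_succ, Nat.factorial_succ]; push_cast; ring
        rw [hfac]
        have h1 : ((2*j).factorial : ℝ) ≠ 0 := Nat.cast_ne_zero.2 (Nat.factorial_ne_zero _)
        have h2 : (r.factorial : ℝ) ≠ 0 := Nat.cast_ne_zero.2 (Nat.factorial_ne_zero _)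
        have h3 : ((r:ℝ)+2) ≠ 0 := by positivity
        have h4 : ((r:ℝ)+1) ≠ 0 := by positivity
        field_simp
      rw [Finset.sum_congr rfl hterm, hlast, Finset.sum_sub_distrib]
      have hA := aux_A_zero_real (k+1) (Nat.succ_ne_zero k)
      rw [Finset.sum_range_succ] at hA
      have hsum1 : ∑ j ∈ range (k + 1),
          (bernoulli (2 * j) : ℝ) * (2 - 2 ^ (2 * j)) /
            ((2 * j).factorial * (2 * (k+1) + 1 - 2 * j).factorial) * (1/c)
          = (∑ j ∈ range (k + 1), (bernoulli (2 * j) : ℝ) * (2 - 2 ^ (2 * j)) /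
            ((2 * j).factorial * (2 * (k+1) + 1 - 2 * j).factorial)) * (1/c) := by
        rw [Finset.sum_mul]
      have hsum2 : ∑ j ∈ range (k + 1),
          ((bernoulli (2 * j) : ℝ) * (2 - 2 ^ (2 * j)) /
            ((2 * j).factorial * (2 * k + 1 - 2 * j).factorial) *
              Pint c (2 * k + 1 - 2 * j)) / c ^ 2
          = ((-1) ^ k / c ^ (2 * k + 1)) / c ^ 2 := by
        rw [← Finset.sum_div, ih]
      rw [hsum1, hsum2]
      have hAz : ∑ j ∈ range (k + 1), (bernoulli (2 * j) : ℝ) * (2 - 2 ^ (2 * j)) /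
            ((2 * j).factorial * (2 * (k+1) + 1 - 2 * j).factorial)
          = - ((bernoulli (2 * (k+1)) : ℝ) * (2 - 2 ^ (2 * (k+1))) /
            ((2 * (k+1)).factorial * (2 * (k+1) + 1 - 2 * (k+1)).factorial)) := by
        linarith [hA]
      rw [hAz]
      have hpow : c ^ (2 * (k+1) + 1) = c ^ (2 * k + 1) * c ^ 2 := by
        rw [← pow_add]; ring_nf
      rw [hpow]
      field_simp
      ring

lemma aux_key (m : ℤ) (hm : m ≠ 0) (k : ℕ) :
    ∫ u in (0:ℝ)..1, (Qpoly k u) * Real.sin (2 * π * m * u)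
    = (-1) ^ k / (2 * π * m) ^ (2 * k + 1) := by
  unfold Qpoly
  set c : ℝ := 2 * π * m with hcdef
  have hc : c ≠ 0 := by
    simp only [hcdef]
    have : (m : ℝ) ≠ 0 := Int.cast_ne_zero.2 hm
    positivity
  have hsin : Real.sin c = 0 := by
    have : c = ((2 * m : ℤ) : ℝ) * π := by push_cast [hcdef]; ring
    rw [this]
    exact Real.sin_int_mul_pi _
  have hrw : (fun u : ℝ =>
      (∑ j ∈ range (k + 1),
        (bernoulli (2 * j) : ℝ) * (2 - 2 ^ (2 * j)) * (1 - u) ^ (2 * k + 1 - 2 * j) /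
          ((2 * j).factorial * (2 * k + 1 - 2 * j).factorial)) * Real.sin (c * u))
      = fun u : ℝ => ∑ j ∈ range (k + 1),
        ((bernoulli (2 * j) : ℝ) * (2 - 2 ^ (2 * j)) /
          ((2 * j).factorial * (2 * k + 1 - 2 * j).factorial)) *
            ((1 - u) ^ (2 * k + 1 - 2 * j) * Real.sin (c * u)) := by
    funext u
    rw [Finset.sum_mul]
    apply Finset.sum_congr rfl
    intro j _
    ring
  rw [hrw, intervalIntegral.integral_finset_sum]
  · have : ∀ j ∈ range (k + 1),
        (∫ u in (0:ℝ)..1, ((bernoulli (2 * j) : ℝ) * (2 - 2 ^ (2 * j)) /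
          ((2 * j).factorial * (2 * k + 1 - 2 * j).factorial)) *
            ((1 - u) ^ (2 * k + 1 - 2 * j) * Real.sin (c * u)))
        = ((bernoulli (2 * j) : ℝ) * (2 - 2 ^ (2 * j)) /
          ((2 * j).factorial * (2 * k + 1 - 2 * j).factorial)) * Pint c (2 * k + 1 - 2 * j) := by
      intro j _
      rw [intervalIntegral.integral_const_mul]
      rfl
    rw [Finset.sum_congr rfl this, aux_J c hc hsin k]
  · intro j _
    apply Continuous.intervalIntegrable
    exact continuous_const.mul (((continuous_const.sub continuous_id).pow _).mul
      (Real.continuous_sin.comp (continuous_const.mul continuous_id)))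

lemma aux_cot (s X : ℝ) (hs : Real.sin s ≠ 0) :
    (Real.cos X - Real.cos (X - 2 * s)) * Real.cot s = -(Real.sin X + Real.sin (X - 2 * s)) := by
  rw [Real.cot_eq_cos_div_sin, ← mul_div_assoc, div_eq_iff hs, show X - 2 * s = X - s - s by ring]
  simp only [Real.cos_sub, Real.sin_sub]
  linear_combination (-(Real.cos X * Real.cos s + Real.sin X * Real.sin s)) * Real.sin_sq_add_cos_sq s

lemma Qpoly_cont (k : ℕ) : Continuous (Qpoly k) := by
  apply continuous_finset_sum
  intro j _
  exact (continuous_const.mul ((continuous_const.sub continuous_id).pow _)).div_const _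

theorem stmt_10 (a b : ℤ) (ha : a ≠ 0) (hb : b ≠ 0) (n : ℕ) (hn : 0 < n)
    (h : ∀ j : ℤ, 1 ≤ j → j ≤ n → a * j + b ≠ 0) (k : ℕ) :
    ∑ j ∈ Finset.Icc 1 n, (1 : ℝ) / (a * j + b) ^ (2 * k + 1) =
      -(1 / (2 * (b : ℝ) ^ (2 * k + 1))) + 1 / (2 * ((a : ℝ) * n + b) ^ (2 * k + 1))
      - ((-1 : ℝ) ^ k * (2 * π) ^ (2 * k + 1) / 2) *
          ∫ u in (0:ℝ)..1,
            (∑ j ∈ Finset.range (k + 1),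
                (bernoulli (2 * j) : ℝ) * (2 - 2 ^ (2 * j)) *
                  (1 - u) ^ (2 * k + 1 - 2 * j) /
                  ((Nat.factorial (2 * j)) * (Nat.factorial (2 * k + 1 - 2 * j)))) *
              (Real.cos (2 * π * (a * n + b) * u) - Real.cos (2 * π * b * u)) *
              Real.cot (π * a * u) := by
  -- the integer parameters
  set mZ : ℕ → ℤ := fun i => a * i + b with hmZ
  have hmne : ∀ i : ℕ, i ≤ n → mZ i ≠ 0 := by
    intro i hi
    rcases Nat.eq_zero_or_pos i with rfl | hipos
    · simpa [hmZ] using hb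
    · exact h i (by exact_mod_cast hipos) (by exact_mod_cast hi)
  have hπ : (π : ℝ) ≠ 0 := Real.pi_ne_zero
  have haR : (a : ℝ) ≠ 0 := Int.cast_ne_zero.2 ha
  -- pointwise identity away from zeros of sin (π a u)
  have hptwise : ∀ u : ℝ, Real.sin (π * a * u) ≠ 0 →
      Qpoly k u * (Real.cos (2 * π * (a * n + b) * u) - Real.cos (2 * π * b * u)) *
        Real.cot (π * a * u)
      = ∑ i ∈ Finset.range n,
          (-(Qpoly k u * Real.sin (2 * π * (mZ (i+1)) * u))
            + -(Qpoly k u * Real.sin (2 * π * (mZ i) * u))) := by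
    intro u hsu
    have htele : Real.cos (2 * π * (a * n + b) * u) - Real.cos (2 * π * b * u)
        = ∑ i ∈ Finset.range n,
            (Real.cos (2 * π * (mZ (i+1)) * u) - Real.cos (2 * π * (mZ i) * u)) := by
      rw [Finset.sum_range_sub (fun i => Real.cos (2 * π * (mZ i) * u)) n]
      norm_num [hmZ]
    rw [htele, Finset.mul_sum, Finset.sum_mul]
    apply Finset.sum_congr rfl
    intro i _
    have hX : 2 * π * ((mZ i : ℝ)) * u = 2 * π * ((mZ (i+1) : ℝ)) * u - 2 * (π * a * u) := by
      simp only [hmZ]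
      push_cast
      ring
    rw [hX, mul_assoc, aux_cot (π * a * u) _ hsu]
    ring
  -- a.e. identity
  have hZ : MeasureTheory.volume {u : ℝ | Real.sin (π * a * u) = 0} = 0 := by
    apply Set.Countable.measure_zero
    apply Set.Countable.mono _ (Set.countable_range (fun q : ℤ => (q : ℝ) / a))
    intro u hu
    obtain ⟨q, hq⟩ := Real.sin_eq_zero_iff.mp hu
    refine ⟨q, ?_⟩
    show (q : ℝ) / a = u
    have h1 : π * (q : ℝ) = π * ((a : ℝ) * u) := by linarith
    have h2 := mul_left_cancel₀ hπ h1
    rw [div_eq_iff haR]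
    linarith
  have hae : ∫ u in (0:ℝ)..1,
        Qpoly k u * (Real.cos (2 * π * (a * n + b) * u) - Real.cos (2 * π * b * u)) *
          Real.cot (π * a * u)
      = ∫ u in (0:ℝ)..1, ∑ i ∈ Finset.range n,
          (-(Qpoly k u * Real.sin (2 * π * (mZ (i+1)) * u))
            + -(Qpoly k u * Real.sin (2 * π * (mZ i) * u))) := by
    apply intervalIntegral.integral_congr_ae
    have hmem : ∀ᵐ u ∂MeasureTheory.volume, u ∉ {u : ℝ | Real.sin (π * a * u) = 0} :=
      MeasureTheory.measure_eq_zero_iff_ae_notMem.mp hZ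
    filter_upwards [hmem] with u hu _
    exact hptwise u hu
  -- evaluate the integral
  have hcont : ∀ m : ℤ, Continuous (fun u : ℝ => Qpoly k u * Real.sin (2 * π * (m:ℝ) * u)) := by
    intro m
    exact (Qpoly_cont k).mul (Real.continuous_sin.comp (continuous_const.mul continuous_id))
  have hval : ∫ u in (0:ℝ)..1,
        Qpoly k u * (Real.cos (2 * π * (a * n + b) * u) - Real.cos (2 * π * b * u)) *
          Real.cot (π * a * u)
      = ∑ i ∈ Finset.range n,
          (-((-1:ℝ) ^ k / (2 * π * (mZ (i+1))) ^ (2 * k + 1))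
            + -((-1:ℝ) ^ k / (2 * π * (mZ i)) ^ (2 * k + 1))) := by
    rw [hae, intervalIntegral.integral_finset_sum]
    · apply Finset.sum_congr rfl
      intro i hi
      have hi' : i < n := Finset.mem_range.mp hi
      rw [intervalIntegral.integral_add, intervalIntegral.integral_neg,
        intervalIntegral.integral_neg, aux_key (mZ (i+1)) (hmne (i+1) hi') k,
        aux_key (mZ i) (hmne i (le_of_lt hi')) k]
      · exact ((hcont (mZ (i+1))).neg).intervalIntegrable 0 1
      · exact ((hcont (mZ i)).neg).intervalIntegrable 0 1
    · intro i _
      exact (((hcont (mZ (i+1))).neg).add ((hcont (mZ i)).neg)).intervalIntegrable 0 1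
  -- final algebra
  rw [show (∫ u in (0:ℝ)..1,
            (∑ j ∈ Finset.range (k + 1),
                (bernoulli (2 * j) : ℝ) * (2 - 2 ^ (2 * j)) *
                  (1 - u) ^ (2 * k + 1 - 2 * j) /
                  ((Nat.factorial (2 * j)) * (Nat.factorial (2 * k + 1 - 2 * j)))) *
              (Real.cos (2 * π * (a * n + b) * u) - Real.cos (2 * π * b * u)) *
              Real.cot (π * a * u))
      = ∑ i ∈ Finset.range n,
          (-((-1:ℝ) ^ k / (2 * π * (mZ (i+1))) ^ (2 * k + 1))
            + -((-1:ℝ) ^ k / (2 * π * (mZ i)) ^ (2 * k + 1))) from hval]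
  set v : ℕ → ℝ := fun i => 1 / ((mZ i : ℝ)) ^ (2 * k + 1) with hv
  have hkk : ((-1:ℝ)) ^ k * (-1:ℝ) ^ k = 1 := by
    rw [← pow_add]
    exact Even.neg_one_pow ⟨k, rfl⟩
  have hsimpl : ∀ i : ℕ, i ≤ n →
      ((-1:ℝ) ^ k * (2 * π) ^ (2 * k + 1) / 2) * (-((-1:ℝ) ^ k / (2 * π * (mZ i)) ^ (2 * k + 1)))
      = -(v i / 2) := by
    intro i hi
    have hmr : ((mZ i : ℝ)) ≠ 0 := Int.cast_ne_zero.2 (hmne i hi)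
    have hp : ((2:ℝ) * π) ^ (2 * k + 1) ≠ 0 := by positivity
    have hm2 : ((mZ i : ℝ)) ^ (2 * k + 1) ≠ 0 := pow_ne_zero _ hmr
    have expand : ((-1:ℝ) ^ k * (2 * π) ^ (2 * k + 1) / 2) *
          (-((-1:ℝ) ^ k / (2 * π * (mZ i)) ^ (2 * k + 1)))
        = -(((-1:ℝ) ^ k * (-1:ℝ) ^ k) * (((2 * π) ^ (2 * k + 1) / (2 * π) ^ (2 * k + 1)) *
            (1 / ((mZ i : ℝ)) ^ (2 * k + 1))) / 2) := by
      rw [mul_pow]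
      field_simp
      ring
    rw [expand, hkk, div_self hp]
    simp [hv]
  have hterm2 : ∀ i ∈ Finset.range n,
      ((-1:ℝ) ^ k * (2 * π) ^ (2 * k + 1) / 2) *
        (-((-1:ℝ) ^ k / (2 * π * (mZ (i+1))) ^ (2 * k + 1))
          + -((-1:ℝ) ^ k / (2 * π * (mZ i)) ^ (2 * k + 1)))
      = -(v (i+1) / 2) + -(v i / 2) := by
    intro i hi
    have hi' : i < n := Finset.mem_range.mp hi
    rw [mul_add, hsimpl (i+1) hi', hsimpl i (le_of_lt hi')]
  rw [Finset.mul_sum, Finset.sum_congr rfl hterm2]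
  have hIcc : ∑ j ∈ Finset.Icc 1 n, (1 : ℝ) / (a * j + b) ^ (2 * k + 1)
      = ∑ i ∈ Finset.range n, v (i+1) := by
    rw [show Finset.Icc 1 n = Finset.Ico 1 (n+1) by rw [Finset.Ico_add_one_right_eq_Icc],
      Finset.sum_Ico_eq_sum_range]
    apply Finset.sum_congr (by norm_num) 
    intro i _
    simp only [hv, hmZ]
    push_cast
    ring_nf
  rw [hIcc]
  have hrel : (∑ i ∈ Finset.range n, v (i+1)) - ∑ i ∈ Finset.range n, v i = v n - v 0 := by
    rw [← Finset.sum_sub_distrib]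
    exact Finset.sum_range_sub v n
  have hsplit : ∑ i ∈ Finset.range n, (-(v (i+1) / 2) + -(v i / 2))
      = -((∑ i ∈ Finset.range n, v (i+1)) / 2) + -((∑ i ∈ Finset.range n, v i) / 2) := by
    rw [Finset.sum_add_distrib]
    congr 1
    · rw [Finset.sum_neg_distrib, Finset.sum_div]
    · rw [Finset.sum_neg_distrib, Finset.sum_div]
  rw [hsplit]
  have hv0 : v 0 = 1 / (b : ℝ) ^ (2 * k + 1) := by
    simp [hv, hmZ]
  have hvn : v n = 1 / ((a : ℝ) * n + b) ^ (2 * k + 1) := by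
    simp only [hv, hmZ]
    push_cast
    ring_nf
  have h2b : -(1 / (2 * (b : ℝ) ^ (2 * k + 1))) = -(v 0) / 2 := by
    rw [hv0]; ring
  have h2n : 1 / (2 * ((a : ℝ) * n + b) ^ (2 * k + 1)) = v n / 2 := by
    rw [hvn, ← div_div]; ring_nf
  rw [h2b, h2n]
  linarith [hrel]
end
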